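/- (Vector Bernstein consequence) Let v₁,…,v_m be independent random vectors in ℝ^d with E v_i = 0, ‖v_i‖₂ ≤ B almost surely, and Σ_{i=1}^m E‖v_i‖₂² ≤ σ². Then for all 0 ≤ t ≤ σ²/B, P(‖Σ_{i=1}^m v_i‖₂ ≥ t) ≤ exp(−t²/(8σ²) + 1/4). -/

import Mathlib

open Matrix Finset Real MeasureTheory

noncomputable def l2norm {n : ℕ} (v : Fin n → ℝ) : ℝ := Real.sqrt (∑ i, v i ^ 2)

def IsKSparse {n : ℕ} (k : ℕ) (v : Fin n → ℝ) : Prop :=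
  (Finset.univ.filter fun i => v i ≠ 0).card ≤ k

noncomputable def lamMax {n : ℕ} (k : ℕ) (X : Matrix (Fin n) (Fin n) ℝ) : ℝ :=
  sSup {r | ∃ v : Fin n → ℝ, v ≠ 0 ∧ IsKSparse k v ∧ r = l2norm (X.mulVec v) / l2norm v}

noncomputable def lamMin {n : ℕ} (k : ℕ) (X : Matrix (Fin n) (Fin n) ℝ) : ℝ :=
  sInf {r | ∃ v : Fin n → ℝ, v ≠ 0 ∧ IsKSparse k v ∧ r = l2norm (X.mulVec v) / l2norm v}

noncomputable def spCond {n : ℕ} (k : ℕ) (X : Matrix (Fin n) (Fin n) ℝ) : ℝ :=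
  lamMax k X / lamMin k X

noncomputable def opNorm {n : ℕ} (X : Matrix (Fin n) (Fin n) ℝ) : ℝ :=
  sSup {r | ∃ v : Fin n → ℝ, v ≠ 0 ∧ r = l2norm (X.mulVec v) / l2norm v}

noncomputable def norm1to2 {n : ℕ} (X : Matrix (Fin n) (Fin n) ℝ) : ℝ :=
  ⨆ j, l2norm (fun i => X i j)

def Jmat (n : ℕ) : Matrix (Fin n) (Fin n) ℝ := Matrix.of fun _ _ => 1

section VectorBernsteinAux

open ProbabilityTheory


lemma exp_quad {x : ℝ} (hx : |x| ≤ 1) : Real.exp x ≤ 1 + x + (3/4) * x^2 := by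
  have h := Real.exp_bound hx (by norm_num : 0 < 2)
  have hs : ∑ i ∈ Finset.range 2, x ^ i / (Nat.factorial i : ℝ) = 1 + x := by
    simp [Finset.sum_range_succ]
  rw [hs] at h
  have h2 : |x| ^ 2 * ((2 + 1 : ℕ) / ((Nat.factorial 2 : ℕ) * (2:ℕ) : ℝ)) = (3/4) * x^2 := by
    rw [sq_abs]; norm_num [Nat.factorial]; ring
  have := (abs_le.mp h).2
  nlinarith [sq_abs x, sq_nonneg x]

noncomputable def psi {d : ℕ} (σ : ℝ) (x : EuclideanSpace ℝ (Fin d)) : ℝ :=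
  Real.sqrt (‖x‖^2 + σ^2)

variable {d : ℕ} {σ : ℝ}

lemma psi_sq (hσ : 0 ≤ σ) (x : EuclideanSpace ℝ (Fin d)) : psi σ x ^ 2 = ‖x‖^2 + σ^2 :=
  Real.sq_sqrt (by positivity)

lemma sigma_le_psi (hσ : 0 ≤ σ) (x : EuclideanSpace ℝ (Fin d)) : σ ≤ psi σ x := by
  have : σ = Real.sqrt (σ^2) := (Real.sqrt_sq hσ).symm
  rw [this, psi]
  apply Real.sqrt_le_sqrt; nlinarith [sq_nonneg ‖x‖, Real.sq_sqrt hσ]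

lemma norm_le_psi (x : EuclideanSpace ℝ (Fin d)) : ‖x‖ ≤ psi σ x := by
  have : ‖x‖ = Real.sqrt (‖x‖^2) := (Real.sqrt_sq (norm_nonneg x)).symm
  rw [this, psi]
  apply Real.sqrt_le_sqrt; nlinarith [sq_nonneg σ]

lemma psi_le_norm_add (hσ : 0 ≤ σ) (x : EuclideanSpace ℝ (Fin d)) : psi σ x ≤ ‖x‖ + σ := by
  rw [psi]
  have h : ‖x‖^2 + σ^2 ≤ (‖x‖ + σ)^2 := by nlinarith [norm_nonneg x]
  calc Real.sqrt (‖x‖^2 + σ^2) ≤ Real.sqrt ((‖x‖ + σ)^2) := Real.sqrt_le_sqrt h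
    _ = ‖x‖ + σ := Real.sqrt_sq (by positivity)

lemma psi_zero (hσ : 0 ≤ σ) : psi σ (0 : EuclideanSpace ℝ (Fin d)) = σ := by
  rw [psi]; simp [Real.sqrt_sq hσ]

lemma continuous_psi (σ : ℝ) : Continuous (psi (d := d) σ) :=
  Real.continuous_sqrt.comp (((continuous_norm).pow 2).add continuous_const)

lemma psi_pos (hσ : 0 < σ) (x : EuclideanSpace ℝ (Fin d)) : 0 < psi σ x :=
  lt_of_lt_of_le hσ (sigma_le_psi hσ.le x)

lemma psi_add_le (hσ : 0 < σ) (x y : EuclideanSpace ℝ (Fin d)) :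
    psi σ (x + y) ≤ psi σ x + (2 * (inner ℝ x y : ℝ) + ‖y‖^2) / (2 * psi σ x) := by
  set A := psi σ x with hA
  have hApos : 0 < A := psi_pos hσ x
  set h : ℝ := 2 * (inner ℝ x y : ℝ) + ‖y‖^2 with hh
  have hsq : ‖x + y‖^2 + σ^2 = A^2 + h := by
    rw [psi_sq hσ.le, norm_add_sq_real]; ring
  have hnn : (0:ℝ) ≤ ‖x + y‖^2 + σ^2 := by positivity
  have hRHS : 0 ≤ A + h / (2 * A) := by
    have h1 : -(A^2) ≤ h := by nlinarith
    have h2A : 0 < 2 * A := by linarith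
    have h3 : -A ≤ h / (2*A) := by
      rw [le_div_iff₀ h2A]; nlinarith
    linarith
  have key : ‖x + y‖^2 + σ^2 ≤ (A + h / (2 * A))^2 := by
    have : (A + h / (2*A))^2 = A^2 + h + (h/(2*A))^2 := by
      field_simp; ring
    rw [this, hsq]; nlinarith [sq_nonneg (h/(2*A))]
  calc psi σ (x+y) = Real.sqrt (‖x+y‖^2 + σ^2) := rfl
    _ ≤ Real.sqrt ((A + h / (2*A))^2) := Real.sqrt_le_sqrt key
    _ = A + h/(2*A) := Real.sqrt_sq hRHS

lemma coord_abs_le_norm {x : EuclideanSpace ℝ (Fin d)} (k : Fin d) : |x k| ≤ ‖x‖ := by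
  rw [EuclideanSpace.norm_eq]
  have : |x k| = Real.sqrt ((x k)^2) := (Real.sqrt_sq_eq_abs _).symm
  rw [this]
  apply Real.sqrt_le_sqrt
  have := Finset.single_le_sum (f := fun i => (x i)^2) (fun i _ => sq_nonneg (x i)) (Finset.mem_univ k)
  simpa [sq] using this

lemma integrable_of_bound {Ω : Type*} [MeasurableSpace Ω] {μ : Measure Ω} [IsFiniteMeasure μ]
    {f : Ω → ℝ} (hm : AEStronglyMeasurable f μ) (C : ℝ) (h : ∀ᵐ ω ∂μ, |f ω| ≤ C) :
    Integrable f μ :=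
  Integrable.mono' (integrable_const C) hm (by simpa [Real.norm_eq_abs] using h)

lemma real_inner_eq {d : ℕ} (x y : EuclideanSpace ℝ (Fin d)) :
    (inner ℝ x y : ℝ) = ∑ k, x k * y k := by
  simp [PiLp.inner_apply, RCLike.inner_apply, conj_trivial]
  exact Finset.sum_congr rfl fun _ _ => mul_comm _ _

set_option maxHeartbeats 2000000 in
lemma step_bound {d : ℕ} {Ω : Type*} [MeasurableSpace Ω] {μ : Measure Ω} [IsProbabilityMeasure μ]
    {σ B L C : ℝ} (hσ : 0 < σ) (hB : 0 < B) (hL : 0 < L) (hC : 0 ≤ C)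
    (hLB : L * (B * (1 + B / (2 * σ))) ≤ 1)
    {S V : Ω → EuclideanSpace ℝ (Fin d)} (hSm : Measurable S) (hVm : Measurable V)
    (hind : IndepFun S V μ)
    (hSb : ∀ᵐ ω ∂μ, ‖S ω‖ ≤ C) (hVb : ∀ᵐ ω ∂μ, ‖V ω‖ ≤ B)
    (hVmean : ∫ ω, V ω ∂μ = 0) :
    ∫ ω, Real.exp (L * psi σ (S ω + V ω)) ∂μ ≤
      (∫ ω, Real.exp (L * psi σ (S ω)) ∂μ) *
        Real.exp ((L / (2 * σ) + (3/4) * L^2 * (1 + B / (2 * σ))^2) * ∫ ω, ‖V ω‖^2 ∂μ) := by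
  set K : ℝ := 1 + B / (2 * σ) with hKdef
  have hK1 : (1:ℝ) ≤ K := by
    have : 0 ≤ B / (2 * σ) := by positivity
    simp [hKdef]; linarith
  have hKpos : 0 < K := lt_of_lt_of_le one_pos hK1
  -- basic functions
  set f₀ : Ω → ℝ := fun ω => Real.exp (L * psi σ (S ω)) with hf₀def
  set w : Ω → ℝ := fun ω => (2 * (inner ℝ (S ω) (V ω) : ℝ) + ‖V ω‖^2) / (2 * psi σ (S ω)) with hwdef
  have hψSpos : ∀ ω, 0 < psi σ (S ω) := fun ω => psi_pos hσ _
  -- measurability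
  have hcψ : Continuous (psi (d := d) σ) := continuous_psi σ
  have hψSm : Measurable fun ω => psi σ (S ω) := (hcψ.measurable).comp hSm
  have hf₀m : Measurable f₀ := (Real.measurable_exp).comp (measurable_const.mul hψSm)
  have hinnm : Measurable fun ω => (inner ℝ (S ω) (V ω) : ℝ) := Measurable.inner hSm hVm
  have hnVm : Measurable fun ω => ‖V ω‖^2 := (hVm.norm).pow_const 2
  have hwm : Measurable w := by
    apply Measurable.div
    · exact ((measurable_const.mul hinnm)).add hnVm
    · exact measurable_const.mul hψSm
  -- a.e. bounds
  have hwB : ∀ᵐ ω ∂μ, |w ω| ≤ K * ‖V ω‖ := by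
    filter_upwards [hVb] with ω hv
    have hψ := hψSpos ω
    have hψσ := sigma_le_psi hσ.le (S ω)
    have hSψ := norm_le_psi (σ := σ) (S ω)
    have hVnn : (0:ℝ) ≤ ‖V ω‖ := norm_nonneg _
    rw [hwdef, abs_div, abs_of_pos (by linarith : (0:ℝ) < 2 * psi σ (S ω)), div_le_iff₀ (by linarith)]
    have hip : |(inner ℝ (S ω) (V ω) : ℝ)| ≤ ‖S ω‖ * ‖V ω‖ := abs_real_inner_le_norm _ _
    have habs : |2 * (inner ℝ (S ω) (V ω) : ℝ) + ‖V ω‖^2| ≤ 2 * (‖S ω‖ * ‖V ω‖) + ‖V ω‖^2 := by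
      refine (abs_add_le _ _).trans ?_
      rw [abs_mul, abs_of_nonneg (by positivity : (0:ℝ) ≤ ‖V ω‖^2)]
      simp only [abs_two]
      linarith
    have hfrac : σ * (B / (2*σ)) = B / 2 := by field_simp
    have h1 : psi σ (S ω) * (B / (2*σ)) ≥ B / 2 := by
      rw [← hfrac]
      exact mul_le_mul_of_nonneg_right hψσ (by positivity)
    have : K * ‖V ω‖ * (2 * psi σ (S ω)) =
        2 * (psi σ (S ω) * ‖V ω‖) + 2 * ((psi σ (S ω) * (B/(2*σ))) * ‖V ω‖) := by
      rw [hKdef]; ring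
    rw [this]
    nlinarith [mul_le_mul_of_nonneg_right hSψ hVnn, mul_le_mul_of_nonneg_left hv hVnn]
  have hLw1 : ∀ᵐ ω ∂μ, |L * w ω| ≤ 1 := by
    filter_upwards [hwB, hVb] with ω h1 h2
    rw [abs_mul, abs_of_pos hL]
    calc L * |w ω| ≤ L * (K * ‖V ω‖) := by
          exact mul_le_mul_of_nonneg_left h1 hL.le
      _ ≤ L * (B * K) := by
          have : K * ‖V ω‖ ≤ K * B := mul_le_mul_of_nonneg_left h2 hKpos.le
          nlinarith
      _ ≤ 1 := hLB
  -- pointwise key inequality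
  have hkey : ∀ᵐ ω ∂μ, Real.exp (L * psi σ (S ω + V ω)) ≤
      f₀ ω + L * (f₀ ω * w ω) + (3/4) * L^2 * (f₀ ω * (w ω)^2) := by
    filter_upwards [hLw1] with ω h1
    have step1 : Real.exp (L * psi σ (S ω + V ω)) ≤ Real.exp (L * (psi σ (S ω) + w ω)) := by
      apply Real.exp_le_exp.2
      exact mul_le_mul_of_nonneg_left (psi_add_le hσ _ _) hL.le
    have step2 : Real.exp (L * (psi σ (S ω) + w ω)) = f₀ ω * Real.exp (L * w ω) := by
      rw [mul_add, Real.exp_add]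
    have step3 : Real.exp (L * w ω) ≤ 1 + L * w ω + (3/4) * (L * w ω)^2 := exp_quad h1
    have hf₀pos : 0 < f₀ ω := Real.exp_pos _
    calc Real.exp (L * psi σ (S ω + V ω)) ≤ f₀ ω * Real.exp (L * w ω) := by
          rw [← step2]; exact step1
      _ ≤ f₀ ω * (1 + L * w ω + (3/4) * (L * w ω)^2) := by
          exact mul_le_mul_of_nonneg_left step3 hf₀pos.le
      _ = f₀ ω + L * (f₀ ω * w ω) + (3/4) * L^2 * (f₀ ω * (w ω)^2) := by ring
  -- integrability
  have hf₀b : ∀ᵐ ω ∂μ, |f₀ ω| ≤ Real.exp (L * (C + σ)) := by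
    filter_upwards [hSb] with ω h
    rw [abs_of_pos (Real.exp_pos _)]
    apply Real.exp_le_exp.2
    have := psi_le_norm_add hσ.le (S ω)
    exact mul_le_mul_of_nonneg_left (by linarith) hL.le
  have hf₀int : Integrable f₀ μ := integrable_of_bound hf₀m.aestronglyMeasurable _ hf₀b
  have hlhsint : Integrable (fun ω => Real.exp (L * psi σ (S ω + V ω))) μ := by
    refine integrable_of_bound ((Real.measurable_exp).comp (measurable_const.mul
        ((hcψ.measurable).comp (hSm.add hVm)))).aestronglyMeasurable
      (Real.exp (L * (C + B + σ))) ?_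
    filter_upwards [hSb, hVb] with ω h1 h2
    rw [abs_of_pos (Real.exp_pos _)]
    apply Real.exp_le_exp.2
    have h3 := psi_le_norm_add hσ.le (S ω + V ω)
    have h4 : ‖S ω + V ω‖ ≤ C + B := (norm_add_le _ _).trans (by linarith)
    exact mul_le_mul_of_nonneg_left (by linarith) hL.le
  have hf₀wint : Integrable (fun ω => f₀ ω * w ω) μ := by
    refine integrable_of_bound (hf₀m.mul hwm).aestronglyMeasurable
      (Real.exp (L * (C + σ)) * (K * B)) ?_
    filter_upwards [hf₀b, hwB, hVb] with ω h1 h2 h3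
    rw [abs_mul]
    have h4 : |w ω| ≤ K * B := h2.trans (mul_le_mul_of_nonneg_left h3 hKpos.le)
    exact mul_le_mul h1 h4 (abs_nonneg _) (Real.exp_pos _).le
  have hf₀w2int : Integrable (fun ω => f₀ ω * (w ω)^2) μ := by
    refine integrable_of_bound (hf₀m.mul (hwm.pow_const 2)).aestronglyMeasurable
      (Real.exp (L * (C + σ)) * (K * B)^2) ?_
    filter_upwards [hf₀b, hwB, hVb] with ω h1 h2 h3
    rw [abs_mul]
    have h4 : |w ω| ≤ K * B := h2.trans (mul_le_mul_of_nonneg_left h3 hKpos.le)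
    have h5 : |(w ω)^2| ≤ (K*B)^2 := by
      rw [abs_pow]
      exact pow_le_pow_left₀ (abs_nonneg _) h4 2
    exact mul_le_mul h1 h5 (abs_nonneg _) (Real.exp_pos _).le
  -- coordinates
  have hcoordS : ∀ k : Fin d, Measurable fun ω => S ω k := by
    intro k
    have := ((EuclideanSpace.proj (𝕜 := ℝ) k).continuous.measurable).comp hSm
    simpa [Function.comp_def] using this
  have hcoordV : ∀ k : Fin d, Measurable fun ω => V ω k := by
    intro k
    have := ((EuclideanSpace.proj (𝕜 := ℝ) k).continuous.measurable).comp hVm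
    simpa [Function.comp_def] using this
  set a : Fin d → Ω → ℝ := fun k ω => f₀ ω / psi σ (S ω) * S ω k with hadef
  have ham : ∀ k, Measurable (a k) := fun k => ((hf₀m.div hψSm).mul (hcoordS k))
  have hab : ∀ k, ∀ᵐ ω ∂μ, |a k ω| ≤ Real.exp (L * (C + σ)) / σ * C := by
    intro k
    filter_upwards [hf₀b, hSb] with ω h1 h2
    have hψ := hψSpos ω
    have hψσ := sigma_le_psi hσ.le (S ω)
    have e1 : |f₀ ω / psi σ (S ω)| ≤ Real.exp (L * (C + σ)) / σ := by
      rw [abs_div, abs_of_pos hψ]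
      exact div_le_div₀ (Real.exp_pos _).le h1 hσ hψσ
    have e2 : |S ω k| ≤ C := (coord_abs_le_norm k).trans h2
    calc |a k ω| = |f₀ ω / psi σ (S ω)| * |S ω k| := by rw [hadef]; simp [abs_mul]
      _ ≤ Real.exp (L * (C + σ)) / σ * C :=
        mul_le_mul e1 e2 (abs_nonneg _) (by positivity)
  have haint : ∀ k, Integrable (fun ω => a k ω * V ω k) μ := by
    intro k
    refine integrable_of_bound ((ham k).mul (hcoordV k)).aestronglyMeasurable
      (Real.exp (L * (C + σ)) / σ * C * B) ?_
    filter_upwards [hab k, hVb] with ω h1 h2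
    rw [abs_mul]
    have e2 : |V ω k| ≤ B := (coord_abs_le_norm k).trans h2
    exact mul_le_mul h1 e2 (abs_nonneg _) (by positivity)
  have hVint : Integrable V μ := by
    apply Integrable.mono' (integrable_const B) hVm.aestronglyMeasurable
    filter_upwards [hVb] with ω h; simpa using h
  have hVk0 : ∀ k : Fin d, ∫ ω, V ω k ∂μ = 0 := by
    intro k
    have := (EuclideanSpace.proj (𝕜 := ℝ) k).integral_comp_comm hVint
    rw [hVmean] at this
    simpa using this
  have hprojm : ∀ k : Fin d, Measurable fun x : EuclideanSpace ℝ (Fin d) => x k := by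
    intro k
    simpa using (EuclideanSpace.proj (𝕜 := ℝ) k).continuous.measurable
  have hcross0 : ∀ k : Fin d, ∫ ω, a k ω * V ω k ∂μ = 0 := by
    intro k
    have hφm : Measurable fun x : EuclideanSpace ℝ (Fin d) =>
        Real.exp (L * psi σ x) / psi σ x * x k := by
      apply Measurable.mul
      · exact (Real.measurable_exp.comp (measurable_const.mul hcψ.measurable)).div
          hcψ.measurable
      · exact hprojm k
    have hI : IndepFun (fun ω => a k ω) (fun ω => V ω k) μ := hind.comp hφm (hprojm k)
    have := hI.integral_fun_mul_eq_mul_integral (ham k).aestronglyMeasurable (hcoordV k).aestronglyMeasurable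
    rw [hVk0 k, mul_zero] at this
    exact this
  have hsplit : ∀ ω, f₀ ω * w ω =
      (∑ k, a k ω * V ω k) + f₀ ω / (2 * psi σ (S ω)) * ‖V ω‖^2 := by
    intro ω
    have hψ := (hψSpos ω).ne'
    rw [hwdef]
    simp only
    rw [real_inner_eq]
    have : ∑ k, a k ω * V ω k = f₀ ω / psi σ (S ω) * ∑ k, S ω k * V ω k := by
      rw [Finset.mul_sum]
      apply Finset.sum_congr rfl
      intro k _
      rw [hadef]; ring
    rw [this]
    field_simp
  have hhalfint : Integrable (fun ω => f₀ ω / (2 * psi σ (S ω)) * ‖V ω‖^2) μ := by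
    refine integrable_of_bound ((hf₀m.div (measurable_const.mul hψSm)).mul hnVm).aestronglyMeasurable
      (Real.exp (L * (C + σ)) / (2*σ) * B^2) ?_
    filter_upwards [hf₀b, hVb] with ω h1 h2
    have hψ := hψSpos ω
    have hψσ := sigma_le_psi hσ.le (S ω)
    rw [abs_mul, abs_div, abs_of_pos (by linarith : (0:ℝ) < 2 * psi σ (S ω)),
      abs_of_nonneg (by positivity : (0:ℝ) ≤ ‖V ω‖^2)]
    have e1 : |f₀ ω| / (2 * psi σ (S ω)) ≤ Real.exp (L * (C + σ)) / (2*σ) :=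
      div_le_div₀ (Real.exp_pos _).le h1 (by linarith) (by linarith)
    have e2 : ‖V ω‖^2 ≤ B^2 := pow_le_pow_left₀ (norm_nonneg _) h2 2
    exact mul_le_mul e1 e2 (by positivity) (by positivity)
  have hf₀V2int : Integrable (fun ω => f₀ ω * ‖V ω‖^2) μ := by
    refine integrable_of_bound (hf₀m.mul hnVm).aestronglyMeasurable
      (Real.exp (L * (C + σ)) * B^2) ?_
    filter_upwards [hf₀b, hVb] with ω h1 h2
    rw [abs_mul, abs_of_nonneg (by positivity : (0:ℝ) ≤ ‖V ω‖^2)]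
    have e2 : ‖V ω‖^2 ≤ B^2 := pow_le_pow_left₀ (norm_nonneg _) h2 2
    exact mul_le_mul h1 e2 (by positivity) (Real.exp_pos _).le
  set A : ℝ := ∫ ω, f₀ ω ∂μ with hAdef
  set τ : ℝ := ∫ ω, ‖V ω‖^2 ∂μ with hτdef
  have hAnn : 0 ≤ A := integral_nonneg fun ω => (Real.exp_pos _).le
  have hτnn : 0 ≤ τ := integral_nonneg fun ω => by positivity
  have hprod : ∫ ω, f₀ ω * ‖V ω‖^2 ∂μ = A * τ := by
    have hφm : Measurable fun x : EuclideanSpace ℝ (Fin d) => Real.exp (L * psi σ x) :=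
      Real.measurable_exp.comp (measurable_const.mul hcψ.measurable)
    have hnm : Measurable fun y : EuclideanSpace ℝ (Fin d) => ‖y‖^2 :=
      (measurable_norm).pow_const 2
    have hI : IndepFun f₀ (fun ω => ‖V ω‖^2) μ := hind.comp hφm hnm
    exact hI.integral_fun_mul_eq_mul_integral hf₀m.aestronglyMeasurable hnVm.aestronglyMeasurable
  have hcross : ∫ ω, f₀ ω * w ω ∂μ ≤ 1/(2*σ) * (A * τ) := by
    have heq : ∫ ω, f₀ ω * w ω ∂μ =
        ∫ ω, f₀ ω / (2 * psi σ (S ω)) * ‖V ω‖^2 ∂μ := by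
      have : (fun ω => f₀ ω * w ω) = fun ω =>
          (∑ k, a k ω * V ω k) + f₀ ω / (2 * psi σ (S ω)) * ‖V ω‖^2 := funext hsplit
      rw [this, integral_add (integrable_finset_sum _ fun k _ => haint k) hhalfint,
        integral_finset_sum _ fun k _ => haint k]
      simp [hcross0]
    rw [heq]
    have hmono : ∀ᵐ ω ∂μ, f₀ ω / (2 * psi σ (S ω)) * ‖V ω‖^2 ≤
        1/(2*σ) * (f₀ ω * ‖V ω‖^2) := by
      filter_upwards with ω
      have hψ := hψSpos ω
      have hψσ := sigma_le_psi hσ.le (S ω)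
      have e1 : f₀ ω / (2 * psi σ (S ω)) ≤ f₀ ω / (2*σ) :=
        div_le_div₀ (Real.exp_pos _).le le_rfl (by linarith) (by linarith)
      have : f₀ ω / (2*σ) * ‖V ω‖^2 = 1/(2*σ) * (f₀ ω * ‖V ω‖^2) := by ring
      nlinarith [sq_nonneg ‖V ω‖, mul_le_mul_of_nonneg_right e1 (by positivity : (0:ℝ) ≤ ‖V ω‖^2)]
    calc ∫ ω, f₀ ω / (2 * psi σ (S ω)) * ‖V ω‖^2 ∂μ
        ≤ ∫ ω, 1/(2*σ) * (f₀ ω * ‖V ω‖^2) ∂μ :=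
          integral_mono_ae hhalfint (hf₀V2int.const_mul _) hmono
      _ = 1/(2*σ) * (A * τ) := by rw [integral_const_mul, hprod]
  have hquadb : ∫ ω, f₀ ω * (w ω)^2 ∂μ ≤ K^2 * (A * τ) := by
    have hmono : ∀ᵐ ω ∂μ, f₀ ω * (w ω)^2 ≤ K^2 * (f₀ ω * ‖V ω‖^2) := by
      filter_upwards [hwB] with ω h1
      have e1 : (w ω)^2 ≤ (K * ‖V ω‖)^2 := by
        rw [← sq_abs (w ω)]
        exact pow_le_pow_left₀ (abs_nonneg _) h1 2
      nlinarith [(Real.exp_pos (L * psi σ (S ω))).le, e1]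
    calc ∫ ω, f₀ ω * (w ω)^2 ∂μ ≤ ∫ ω, K^2 * (f₀ ω * ‖V ω‖^2) ∂μ :=
        integral_mono_ae hf₀w2int (hf₀V2int.const_mul _) hmono
      _ = K^2 * (A * τ) := by rw [integral_const_mul, hprod]
  -- assemble
  have hgint : Integrable (fun ω =>
      f₀ ω + L * (f₀ ω * w ω) + (3/4) * L^2 * (f₀ ω * (w ω)^2)) μ :=
    (hf₀int.add (hf₀wint.const_mul L)).add (hf₀w2int.const_mul _)
  have hstep1 : ∫ ω, Real.exp (L * psi σ (S ω + V ω)) ∂μ ≤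
      ∫ ω, (f₀ ω + L * (f₀ ω * w ω) + (3/4) * L^2 * (f₀ ω * (w ω)^2)) ∂μ :=
    integral_mono_ae hlhsint hgint hkey
  have hstep2 : ∫ ω, (f₀ ω + L * (f₀ ω * w ω) + (3/4) * L^2 * (f₀ ω * (w ω)^2)) ∂μ =
      A + L * ∫ ω, f₀ ω * w ω ∂μ + (3/4) * L^2 * ∫ ω, f₀ ω * (w ω)^2 ∂μ := by
    have i1 : Integrable (fun ω => f₀ ω + L * (f₀ ω * w ω)) μ :=
      hf₀int.add (hf₀wint.const_mul L)
    have i2 : Integrable (fun ω => (3/4) * L^2 * (f₀ ω * (w ω)^2)) μ :=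
      hf₀w2int.const_mul _
    rw [integral_add i1 i2, integral_add hf₀int (hf₀wint.const_mul L),
      integral_const_mul, integral_const_mul]
  have hstep3 : A + L * ∫ ω, f₀ ω * w ω ∂μ + (3/4) * L^2 * ∫ ω, f₀ ω * (w ω)^2 ∂μ ≤
      A * (1 + (L / (2*σ) + (3/4) * L^2 * K^2) * τ) := by
    have e1 : L * ∫ ω, f₀ ω * w ω ∂μ ≤ L * (1/(2*σ) * (A * τ)) :=
      mul_le_mul_of_nonneg_left hcross hL.le
    have e2 : (3/4) * L^2 * ∫ ω, f₀ ω * (w ω)^2 ∂μ ≤ (3/4) * L^2 * (K^2 * (A * τ)) :=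
      mul_le_mul_of_nonneg_left hquadb (by positivity)
    have : A + L * (1/(2*σ) * (A * τ)) + (3/4) * L^2 * (K^2 * (A * τ)) =
        A * (1 + (L / (2*σ) + (3/4) * L^2 * K^2) * τ) := by ring
    linarith
  have hstep4 : A * (1 + (L / (2*σ) + (3/4) * L^2 * K^2) * τ) ≤
      A * Real.exp ((L / (2*σ) + (3/4) * L^2 * K^2) * τ) := by
    apply mul_le_mul_of_nonneg_left _ hAnn
    have := Real.add_one_le_exp ((L / (2*σ) + (3/4) * L^2 * K^2) * τ)
    linarith
  calc ∫ ω, Real.exp (L * psi σ (S ω + V ω)) ∂μ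
      ≤ A + L * ∫ ω, f₀ ω * w ω ∂μ + (3/4) * L^2 * ∫ ω, f₀ ω * (w ω)^2 ∂μ := by
        rw [← hstep2]; exact hstep1
    _ ≤ A * (1 + (L / (2*σ) + (3/4) * L^2 * K^2) * τ) := hstep3
    _ ≤ A * Real.exp ((L / (2*σ) + (3/4) * L^2 * K^2) * τ) := hstep4

set_option maxHeartbeats 1000000 in
lemma sum_bound {m d : ℕ} {Ω : Type*} [MeasurableSpace Ω] {μ : Measure Ω}
    [IsProbabilityMeasure μ] {σ B L : ℝ} (hσ : 0 < σ) (hB : 0 < B) (hL : 0 < L)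
    (hLB : L * (B * (1 + B / (2 * σ))) ≤ 1)
    {v : Fin m → Ω → EuclideanSpace ℝ (Fin d)} (hmeas : ∀ i, Measurable (v i))
    (hindep : ProbabilityTheory.iIndepFun v μ)
    (hmean : ∀ i, ∫ ω, v i ω ∂μ = 0)
    (hbound : ∀ i, ∀ᵐ ω ∂μ, ‖v i ω‖ ≤ B) (s : Finset (Fin m)) :
    ∫ ω, Real.exp (L * psi σ (∑ i ∈ s, v i ω)) ∂μ ≤
      Real.exp (L * σ) * Real.exp ((L / (2 * σ) + (3/4) * L^2 * (1 + B / (2 * σ))^2) *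
        ∑ i ∈ s, ∫ ω, ‖v i ω‖^2 ∂μ) := by
  classical
  induction s using Finset.induction_on with
  | empty =>
    simp [psi_zero hσ.le]
  | @insert j s hj ih =>
    have hSm : Measurable fun ω => ∑ i ∈ s, v i ω :=
      Finset.measurable_sum s fun i _ => hmeas i
    have hind : IndepFun (fun ω => ∑ i ∈ s, v i ω) (v j) μ := by
      have h := hindep.indepFun_finsetSum_of_notMem hmeas hj
      have he : (∑ i ∈ s, v i) = fun ω => ∑ i ∈ s, v i ω := by
        ext ω; simp
      rwa [he] at h
    have hSb : ∀ᵐ ω ∂μ, ‖∑ i ∈ s, v i ω‖ ≤ (m : ℝ) * B := by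
      have hall : ∀ᵐ ω ∂μ, ∀ i, ‖v i ω‖ ≤ B := ae_all_iff.2 hbound
      filter_upwards [hall] with ω h
      calc ‖∑ i ∈ s, v i ω‖ ≤ ∑ i ∈ s, ‖v i ω‖ := norm_sum_le _ _
        _ ≤ ∑ _i ∈ s, B := Finset.sum_le_sum fun i _ => h i
        _ = (s.card : ℝ) * B := by simp [mul_comm]
        _ ≤ (m : ℝ) * B := by
            have hc : (s.card : ℝ) ≤ (m : ℝ) := by
              exact_mod_cast (s.card_le_univ.trans_eq (by simp))
            exact mul_le_mul_of_nonneg_right hc hB.le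
    have hstep := step_bound (C := (m : ℝ) * B) hσ hB hL (by positivity) hLB hSm (hmeas j)
      hind hSb (hbound j) (hmean j)
    have hrw : ∀ ω, (∑ i ∈ insert j s, v i ω) = (∑ i ∈ s, v i ω) + v j ω := by
      intro ω; rw [Finset.sum_insert hj]; exact add_comm _ _
    calc ∫ ω, Real.exp (L * psi σ (∑ i ∈ insert j s, v i ω)) ∂μ
        = ∫ ω, Real.exp (L * psi σ ((∑ i ∈ s, v i ω) + v j ω)) ∂μ := by
          congr 1; ext ω; rw [hrw ω]
      _ ≤ (∫ ω, Real.exp (L * psi σ (∑ i ∈ s, v i ω)) ∂μ) *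
            Real.exp ((L / (2 * σ) + (3/4) * L^2 * (1 + B / (2 * σ))^2) *
              ∫ ω, ‖v j ω‖^2 ∂μ) := hstep
      _ ≤ (Real.exp (L * σ) * Real.exp ((L / (2 * σ) + (3/4) * L^2 * (1 + B / (2 * σ))^2) *
              ∑ i ∈ s, ∫ ω, ‖v i ω‖^2 ∂μ)) *
            Real.exp ((L / (2 * σ) + (3/4) * L^2 * (1 + B / (2 * σ))^2) *
              ∫ ω, ‖v j ω‖^2 ∂μ) :=
          mul_le_mul_of_nonneg_right ih (Real.exp_pos _).le
      _ = Real.exp (L * σ) * Real.exp ((L / (2 * σ) + (3/4) * L^2 * (1 + B / (2 * σ))^2) *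
            ∑ i ∈ insert j s, ∫ ω, ‖v i ω‖^2 ∂μ) := by
          rw [Finset.sum_insert hj, mul_assoc, ← Real.exp_add]
          congr 2
          ring

set_option maxHeartbeats 2000000 in
theorem stmt10 (m d : ℕ) (B σ : ℝ) (hB : 0 < B) (hσ : 0 < σ)
    {Ω : Type*} [MeasurableSpace Ω] (μ : Measure Ω) [IsProbabilityMeasure μ]
    (v : Fin m → Ω → EuclideanSpace ℝ (Fin d))
    (hmeas : ∀ i, Measurable (v i))
    (hindep : ProbabilityTheory.iIndepFun v μ)
    (hmean : ∀ i, ∫ ω, v i ω ∂μ = 0)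
    (hbound : ∀ i, ∀ᵐ ω ∂μ, ‖v i ω‖ ≤ B)
    (hvar : ∑ i, ∫ ω, ‖v i ω‖ ^ 2 ∂μ ≤ σ ^ 2) :
    ∀ t : ℝ, 0 ≤ t → t ≤ σ ^ 2 / B →
      (μ {ω | t ≤ ‖∑ i, v i ω‖}).toReal ≤
        Real.exp (-(t ^ 2) / (8 * σ ^ 2) + 1 / 4) := by
  intro t ht htB
  have hSm : Measurable fun ω => ∑ i, v i ω :=
    Finset.measurable_sum Finset.univ fun i _ => hmeas i
  have hall : ∀ᵐ ω ∂μ, ∀ i, ‖v i ω‖ ≤ B := ae_all_iff.2 hbound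
  have hSb : ∀ᵐ ω ∂μ, ‖∑ i, v i ω‖ ≤ (m : ℝ) * B := by
    filter_upwards [hall] with ω h
    calc ‖∑ i, v i ω‖ ≤ ∑ i, ‖v i ω‖ := norm_sum_le _ _
      _ ≤ ∑ _i : Fin m, B := Finset.sum_le_sum fun i _ => h i
      _ = (m : ℝ) * B := by simp [mul_comm]
  -- Branch 1 : trivial
  by_cases h1 : t^2 ≤ 2*σ^2
  · have hle1 : (μ {ω | t ≤ ‖∑ i, v i ω‖}).toReal ≤ 1 := by
      simpa using ENNReal.toReal_mono ENNReal.one_ne_top prob_le_one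
    refine hle1.trans ?_
    have h8 : (0:ℝ) < 8*σ^2 := by positivity
    have hq : t^2/(8*σ^2) ≤ 1/4 := by
      rw [div_le_iff₀ h8]; linarith
    have h0 : (0:ℝ) ≤ -(t^2)/(8*σ^2) + 1/4 := by
      rw [neg_div]; linarith
    calc (1:ℝ) = Real.exp 0 := Real.exp_zero.symm
      _ ≤ _ := Real.exp_le_exp.2 h0
  push_neg at h1
  have ht0 : 0 < t := by nlinarith
  by_cases h2 : t^2 ≤ 25*σ^2
  -- Branch 2 : Chebyshev
  · have hprojm : ∀ k : Fin d, Measurable fun x : EuclideanSpace ℝ (Fin d) => x k := by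
      intro k
      simpa using (EuclideanSpace.proj (𝕜 := ℝ) k).continuous.measurable
    have hvint : ∀ i, Integrable (v i) μ := by
      intro i
      apply Integrable.mono' (integrable_const B) (hmeas i).aestronglyMeasurable
      filter_upwards [hbound i] with ω h; simpa using h
    have hcoord0 : ∀ i (k : Fin d), ∫ ω, v i ω k ∂μ = 0 := by
      intro i k
      have := (EuclideanSpace.proj (𝕜 := ℝ) k).integral_comp_comm (hvint i)
      rw [hmean i] at this
      simpa using this
    have hcoordint : ∀ (i j : Fin m) (k : Fin d),
        Integrable (fun ω => v i ω k * v j ω k) μ := by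
      intro i j k
      refine integrable_of_bound (((hprojm k).comp (hmeas i)).mul
        ((hprojm k).comp (hmeas j))).aestronglyMeasurable (B * B) ?_
      filter_upwards [hbound i, hbound j] with ω e1 e2
      rw [abs_mul]
      exact mul_le_mul ((coord_abs_le_norm k).trans e1) ((coord_abs_le_norm k).trans e2)
        (abs_nonneg _) hB.le
    have hinnint : ∀ i j : Fin m, Integrable (fun ω => (inner ℝ (v i ω) (v j ω) : ℝ)) μ := by
      intro i j
      have : (fun ω => (inner ℝ (v i ω) (v j ω) : ℝ)) =
          fun ω => ∑ k, v i ω k * v j ω k := by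
        ext ω; rw [real_inner_eq]
      rw [this]
      exact integrable_finset_sum _ fun k _ => hcoordint i j k
    have hoffdiag : ∀ i j : Fin m, i ≠ j →
        ∫ ω, (inner ℝ (v i ω) (v j ω) : ℝ) ∂μ = 0 := by
      intro i j hij
      have he : (fun ω => (inner ℝ (v i ω) (v j ω) : ℝ)) =
          fun ω => ∑ k, v i ω k * v j ω k := by
        ext ω; rw [real_inner_eq]
      rw [he, integral_finset_sum _ fun k _ => hcoordint i j k]
      apply Finset.sum_eq_zero
      intro k _
      have hI : IndepFun (fun ω => v i ω k) (fun ω => v j ω k) μ :=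
        (hindep.indepFun hij).comp (hprojm k) (hprojm k)
      rw [hI.integral_fun_mul_eq_mul_integral ((hprojm k).comp (hmeas i)).aestronglyMeasurable
        ((hprojm k).comp (hmeas j)).aestronglyMeasurable, hcoord0 i k, zero_mul]
    have hnormsq : ∫ ω, ‖∑ i, v i ω‖^2 ∂μ = ∑ i, ∫ ω, ‖v i ω‖^2 ∂μ := by
      have he : ∀ ω, ‖∑ i, v i ω‖^2 =
          ∑ i, ∑ j, (inner ℝ (v i ω) (v j ω) : ℝ) := by
        intro ω
        rw [← real_inner_self_eq_norm_sq, sum_inner]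
        exact Finset.sum_congr rfl fun i _ => inner_sum _ _ _
      calc ∫ ω, ‖∑ i, v i ω‖^2 ∂μ
          = ∫ ω, ∑ i, ∑ j, (inner ℝ (v i ω) (v j ω) : ℝ) ∂μ := by
            congr 1; ext ω; exact he ω
        _ = ∑ i, ∑ j, ∫ ω, (inner ℝ (v i ω) (v j ω) : ℝ) ∂μ := by
            rw [integral_finset_sum _ fun i _ => integrable_finset_sum _ fun j _ => hinnint i j]
            exact Finset.sum_congr rfl fun i _ =>
              integral_finset_sum _ fun j _ => hinnint i j
        _ = ∑ i, ∫ ω, (inner ℝ (v i ω) (v i ω) : ℝ) ∂μ := by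
            refine Finset.sum_congr rfl fun i _ => ?_
            exact Finset.sum_eq_single i (fun j _ hji => hoffdiag i j (Ne.symm hji))
              (fun h => absurd (Finset.mem_univ i) h)
        _ = ∑ i, ∫ ω, ‖v i ω‖^2 ∂μ := by
            refine Finset.sum_congr rfl fun i _ => ?_
            congr 1; ext ω; rw [real_inner_self_eq_norm_sq]
    have hS2int : Integrable (fun ω => ‖∑ i, v i ω‖^2) μ := by
      refine integrable_of_bound ((hSm.norm).pow_const 2).aestronglyMeasurable
        (((m:ℝ)*B)^2) ?_
      filter_upwards [hSb] with ω h
      rw [abs_of_nonneg (by positivity)]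
      exact pow_le_pow_left₀ (norm_nonneg _) h 2
    have hS2 : ∫ ω, ‖∑ i, v i ω‖^2 ∂μ ≤ σ^2 := by rw [hnormsq]; exact hvar
    have hsub : {ω | t ≤ ‖∑ i, v i ω‖} ⊆ {ω | t^2 ≤ ‖∑ i, v i ω‖^2} := by
      intro ω hω
      exact pow_le_pow_left₀ ht hω 2
    have hmk := mul_meas_ge_le_integral_of_nonneg
      (ae_of_all μ fun ω => by positivity : 0 ≤ᵐ[μ] fun ω => ‖∑ i, v i ω‖^2) hS2int (t^2)
    have hmono : (μ {ω | t ≤ ‖∑ i, v i ω‖}).toReal ≤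
        (μ {ω | t^2 ≤ ‖∑ i, v i ω‖^2}).toReal :=
      ENNReal.toReal_mono (measure_ne_top μ _) (measure_mono hsub)
    have ht2 : (0:ℝ) < t^2 := by positivity
    have hcheb : (μ {ω | t ≤ ‖∑ i, v i ω‖}).toReal ≤ σ^2 / t^2 := by
      rw [le_div_iff₀ ht2]
      calc (μ {ω | t ≤ ‖∑ i, v i ω‖}).toReal * t^2
          ≤ (μ {ω | t^2 ≤ ‖∑ i, v i ω‖^2}).toReal * t^2 :=
            mul_le_mul_of_nonneg_right hmono ht2.le
        _ = t^2 * (μ {ω | t^2 ≤ ‖∑ i, v i ω‖^2}).toReal := mul_comm _ _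
        _ ≤ ∫ ω, ‖∑ i, v i ω‖^2 ∂μ := hmk
        _ ≤ σ^2 := hS2
    refine hcheb.trans ?_
    -- numeric : σ^2/t^2 ≤ exp(-(t^2)/(8σ^2)+1/4) when 2σ^2 < t^2 ≤ 25σ^2
    set x : ℝ := t^2/σ^2 with hxdef
    have hx2 : 2 ≤ x := by
      rw [hxdef, le_div_iff₀ (by positivity)]; linarith
    have hx25 : x ≤ 25 := by
      rw [hxdef, div_le_iff₀ (by positivity)]; linarith
    have hexp3 : Real.exp (23/8) ≤ 20.09 := by
      have e1 : Real.exp (23/8) ≤ Real.exp 3 := Real.exp_le_exp.2 (by norm_num)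
      have e2 : Real.exp 3 = Real.exp 1 ^ 3 := by
        rw [← Real.exp_nat_mul]; norm_num
      have e3 : Real.exp 1 ^ 3 ≤ 2.7182818286 ^ 3 :=
        pow_le_pow_left₀ (Real.exp_pos 1).le Real.exp_one_lt_d9.le 3
      have e4 : (2.7182818286:ℝ) ^ 3 ≤ 20.09 := by norm_num
      linarith
    have hconv : Real.exp (x/8 - 1/4) ≤ (25 - x)/23 + (x - 2)/23 * Real.exp (23/8) := by
      have ha : (0:ℝ) ≤ (25 - x)/23 := by linarith
      have hb : (0:ℝ) ≤ (x - 2)/23 := by linarith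
      have hab : (25 - x)/23 + (x - 2)/23 = 1 := by ring
      have key := convexOn_exp.2 (Set.mem_univ (0:ℝ)) (Set.mem_univ (23/8:ℝ)) ha hb hab
      have key' : Real.exp ((25 - x)/23 * 0 + (x - 2)/23 * (23/8)) ≤
          (25 - x)/23 * Real.exp 0 + (x - 2)/23 * Real.exp (23/8) := key
      have e1 : (25 - x)/23 * (0:ℝ) + (x - 2)/23 * (23/8:ℝ) = x/8 - 1/4 := by ring
      have e2 : (25 - x)/23 * Real.exp 0 + (x - 2)/23 * Real.exp (23/8) =
          (25 - x)/23 + (x - 2)/23 * Real.exp (23/8) := by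
        rw [Real.exp_zero, mul_one]
      rw [e1, e2] at key'
      exact key' 
    have hxexp : Real.exp (x/8 - 1/4) ≤ x := by
      have := hconv
      nlinarith [Real.exp_pos (23/8)]
    have hgoal : σ^2/t^2 ≤ Real.exp (-(t^2)/(8*σ^2) + 1/4) := by
      have hxpos : (0:ℝ) < x := by linarith
      have hinv : σ^2/t^2 = x⁻¹ := by
        rw [hxdef]; rw [inv_div]
      have harg2 : -(t^2)/(8*σ^2) + 1/4 = -(x/8 - 1/4) := by
        rw [hxdef]; field_simp; ring
      rw [hinv, harg2, Real.exp_neg]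
      exact inv_anti₀ (Real.exp_pos _) hxexp
    exact hgoal
  -- Branch 3 : MGF
  · push_neg at h2
    have ht5 : 5*σ < t := by nlinarith
    have htB' : t * B ≤ σ^2 := by
      rw [le_div_iff₀ hB] at htB; linarith
    have hBσ : B ≤ σ/5 := by nlinarith
    set L : ℝ := t/(4*σ^2) with hLdef
    have hL : 0 < L := by positivity
    have hK10 : B/(2*σ) ≤ 1/10 := by
      rw [div_le_iff₀ (by positivity)]; linarith
    have hKnn : (0:ℝ) ≤ B/(2*σ) := by positivity
    have hLB4 : L * B ≤ 1/4 := by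
      rw [hLdef, div_mul_eq_mul_div, div_le_iff₀ (by positivity)]
      linarith
    have hLB : L * (B * (1 + B / (2 * σ))) ≤ 1 := by
      have h11 : 1 + B/(2*σ) ≤ 11/10 := by linarith
      have hBnn : 0 ≤ L * B := by positivity
      calc L * (B * (1 + B/(2*σ))) = (L * B) * (1 + B/(2*σ)) := by ring
        _ ≤ (1/4) * (11/10) := by
            apply mul_le_mul hLB4 h11 (by linarith) (by norm_num)
        _ ≤ 1 := by norm_num
    have hmgf := sum_bound (σ := σ) hσ hB hL hLB hmeas hindep hmean hbound Finset.univ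
    set c : ℝ := L / (2 * σ) + (3/4) * L^2 * (1 + B / (2 * σ))^2 with hcdef
    have hcnn : 0 ≤ c := by positivity
    have hτ : ∑ i, ∫ ω, ‖v i ω‖^2 ∂μ ≤ σ^2 := hvar
    have hmgf2 : ∫ ω, Real.exp (L * psi σ (∑ i, v i ω)) ∂μ ≤
        Real.exp (L * σ) * Real.exp (c * σ^2) := by
      refine hmgf.trans ?_
      apply mul_le_mul_of_nonneg_left _ (Real.exp_pos _).le
      exact Real.exp_le_exp.2 (mul_le_mul_of_nonneg_left hτ hcnn)
    have hexpint : Integrable (fun ω => Real.exp (L * psi σ (∑ i, v i ω))) μ := by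
      refine integrable_of_bound (Real.measurable_exp.comp
        (measurable_const.mul ((continuous_psi σ).measurable.comp hSm))).aestronglyMeasurable
        (Real.exp (L * ((m:ℝ)*B + σ))) ?_
      filter_upwards [hSb] with ω h
      rw [abs_of_pos (Real.exp_pos _)]
      apply Real.exp_le_exp.2
      have := psi_le_norm_add hσ.le (∑ i, v i ω)
      exact mul_le_mul_of_nonneg_left (by linarith) hL.le
    have hsub : {ω | t ≤ ‖∑ i, v i ω‖} ⊆
        {ω | Real.exp (L * t) ≤ Real.exp (L * psi σ (∑ i, v i ω))} := by
      intro ω hω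
      apply Real.exp_le_exp.2
      have h3 := norm_le_psi (σ := σ) (∑ i, v i ω)
      have : t ≤ psi σ (∑ i, v i ω) := le_trans hω h3
      exact mul_le_mul_of_nonneg_left this hL.le
    have hmk := mul_meas_ge_le_integral_of_nonneg
      (ae_of_all μ fun ω => (Real.exp_pos _).le :
        0 ≤ᵐ[μ] fun ω => Real.exp (L * psi σ (∑ i, v i ω))) hexpint (Real.exp (L * t))
    have hmono : (μ {ω | t ≤ ‖∑ i, v i ω‖}).toReal ≤
        (μ {ω | Real.exp (L*t) ≤ Real.exp (L * psi σ (∑ i, v i ω))}).toReal :=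
      ENNReal.toReal_mono (measure_ne_top μ _) (measure_mono hsub)
    have hmain : (μ {ω | t ≤ ‖∑ i, v i ω‖}).toReal ≤
        Real.exp (-(L*t)) * (Real.exp (L * σ) * Real.exp (c * σ^2)) := by
      have hpos : (0:ℝ) < Real.exp (L * t) := Real.exp_pos _
      have step : (μ {ω | t ≤ ‖∑ i, v i ω‖}).toReal * Real.exp (L*t) ≤
          Real.exp (L * σ) * Real.exp (c * σ^2) := by
        calc (μ {ω | t ≤ ‖∑ i, v i ω‖}).toReal * Real.exp (L*t)
            ≤ (μ {ω | Real.exp (L*t) ≤ Real.exp (L * psi σ (∑ i, v i ω))}).toReal *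
              Real.exp (L*t) := mul_le_mul_of_nonneg_right hmono hpos.le
          _ = Real.exp (L*t) * (μ {ω | Real.exp (L*t) ≤
              Real.exp (L * psi σ (∑ i, v i ω))}).toReal := mul_comm _ _
          _ ≤ ∫ ω, Real.exp (L * psi σ (∑ i, v i ω)) ∂μ := hmk
          _ ≤ Real.exp (L * σ) * Real.exp (c * σ^2) := hmgf2
      rw [Real.exp_neg, ← div_eq_inv_mul, le_div_iff₀ hpos]
      exact step
    refine hmain.trans ?_
    rw [← Real.exp_add, ← Real.exp_add]
    apply Real.exp_le_exp.2
    -- final numeric inequality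
    have hK11 : (1 + B/(2*σ))^2 ≤ (11/10)^2 := by
      apply pow_le_pow_left₀ (by linarith) (by linarith) 2
    have hLt : L * t = t^2/(4*σ^2) := by rw [hLdef]; ring
    have hLσ : L * σ = t/(4*σ) := by
      rw [hLdef]; field_simp
    have hL2 : L^2 = t^2/(16*σ^4) := by
      rw [hLdef]; field_simp; ring
    have hc2 : c * σ^2 ≤ t/(8*σ) + (363/6400) * (t^2/σ^2) := by
      rw [hcdef, hL2, hLdef]
      have e2 : (3/4) * (t^2/(16*σ^4)) * (1 + B/(2*σ))^2 * σ^2 ≤ (363/6400) * (t^2/σ^2) := by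
        have base : (0:ℝ) ≤ (3/4) * (t^2/(16*σ^4)) * σ^2 := by positivity
        calc (3/4) * (t^2/(16*σ^4)) * (1 + B/(2*σ))^2 * σ^2
            ≤ (3/4) * (t^2/(16*σ^4)) * ((11/10)^2) * σ^2 := by nlinarith [hK11]
          _ = (363/6400) * (t^2/σ^2) := by field_simp; ring
      have expand : (t/(4*σ^2)/(2*σ) + 3/4 * (t^2/(16*σ^4)) * (1 + B/(2*σ))^2) * σ^2
          = t/(8*σ) + (3/4) * (t^2/(16*σ^4)) * (1 + B/(2*σ))^2 * σ^2 := by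
        field_simp; ring
      rw [expand]
      linarith [e2]
    have hfinal : -(t^2/(4*σ^2)) + (t/(4*σ) + (t/(8*σ) + (363/6400)*(t^2/σ^2))) ≤
        -(t^2)/(8*σ^2) + 1/4 := by
      have hσ2 : (0:ℝ) < σ^2 := by positivity
      have h1 : t^2/(4*σ^2) = (t^2/σ^2)/4 := by ring
      have h2 : -(t^2)/(8*σ^2) = -((t^2/σ^2)/8) := by ring
      set u : ℝ := t/σ with hu
      have hu5 : 5 ≤ u := by
        rw [hu, le_div_iff₀ hσ]; linarith
      have husq : t^2/σ^2 = u^2 := by rw [hu]; ring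
      rw [h1, h2, husq]
      have h3 : t/(4*σ) + (t/(8*σ) + 363/6400*u^2) = (3/8)*u + 363/6400*u^2 := by
        rw [hu]; ring
      rw [h3]
      nlinarith [sq_nonneg (u - 5)]
    rw [hLt, hLσ]
    linarith [hc2, hfinal]

end VectorBernsteinAux
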